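/- Let r ≥ 1 and define G : ℂ^{r−1} × ℂˣ → ℂ^{r−1} × ℂˣ sending (ζ_{1/2}, ζ_{3/2}, …, ζ_{r−1/2}) (indexed by half-integers 1/2,…,r−1/2, with ζ_{r−1/2} ≠ 0) to (λ_{r+1},…,λ_{2r}) where λ_i = (1/2)·∑_{j,k ∈ 1/2+ℕ, j+k = i−1} ζ_j ζ_k. Then G is surjective, and G(ζ) = G(ζ′) if and only if ζ′ = ±ζ. -/

import Mathlib

/-- Twisted quadratic map: with `z m = ζ_{m+1/2}`, one has
`λ_i = (1/2) ∑_{j+k=i-1, j,k ∈ 1/2+ℕ} ζ_j ζ_k = (1/2) ∑_{a+b=i-2, a,b ∈ ℕ} z_a z_b`. -/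
noncomputable def quadMapTw (z : ℕ → ℂ) (i : ℕ) : ℂ :=
  (1/2) * ∑ a ∈ Finset.range (i - 1), z a * z (i - 2 - a)

private noncomputable def convSq (w : ℕ → ℂ) (n : ℕ) : ℂ :=
  ∑ a ∈ Finset.range (n+1), w a * w (n - a)

private lemma convSq_zero (w : ℕ → ℂ) : convSq w 0 = w 0 * w 0 := by
  simp [convSq]

private lemma convSq_congr {w w' : ℕ → ℂ} {n : ℕ} (h : ∀ a ≤ n, w a = w' a) :
    convSq w n = convSq w' n := by
  unfold convSq
  refine Finset.sum_congr rfl fun a ha => ?_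
  rw [Finset.mem_range] at ha
  rw [h a (by omega), h (n - a) (by omega)]

private lemma convSq_neg (w : ℕ → ℂ) (n : ℕ) :
    convSq (fun m => - w m) n = convSq w n := by
  simp [convSq]

private lemma convSq_split (w : ℕ → ℂ) (n : ℕ) :
    convSq w (n+1) = 2 * w 0 * w (n+1) + ∑ a ∈ Finset.range n, w (a+1) * w (n - a) := by
  unfold convSq
  rw [Finset.sum_range_succ, Finset.sum_range_succ']
  simp only [Nat.succ_sub_succ, Nat.sub_zero, Nat.sub_self]
  ring

private lemma exists_sqrt_seq (c : ℕ → ℂ) (s : ℂ) (hs0 : s ≠ 0) (hs : s * s = c 0) :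
    ∀ N : ℕ, ∃ w : ℕ → ℂ, w 0 = s ∧ ∀ n ≤ N, convSq w n = c n := by
  intro N
  induction N with
  | zero =>
    refine ⟨fun m => if m = 0 then s else 0, by simp, ?_⟩
    intro n hn
    interval_cases n
    simp [convSq, hs]
  | succ N ih =>
    obtain ⟨w, hw0, hw⟩ := ih
    set S : ℂ := ∑ a ∈ Finset.range N, w (a+1) * w (N - a) with hS
    set t : ℂ := (c (N+1) - S) / (2*s) with ht
    refine ⟨fun m => if m = N+1 then t else w m, ?_, ?_⟩
    · show (if (0:ℕ) = N+1 then t else w 0) = s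
      rw [if_neg (by omega)]
      exact hw0
    · intro n hn
      rcases Nat.lt_or_ge n (N+1) with hlt | hge
      · rw [convSq_congr (w' := w) ?_, hw n (by omega)]
        intro a ha
        exact if_neg (by omega)
      · have hn' : n = N+1 := by omega
        subst hn'
        rw [convSq_split]
        show 2 * (if (0:ℕ) = N+1 then t else w 0) * (if N+1 = N+1 then t else w (N+1)) +
            ∑ a ∈ Finset.range N,
              (if a+1 = N+1 then t else w (a+1)) * (if N - a = N+1 then t else w (N - a))
            = c (N+1)
        rw [if_pos rfl, if_neg (show ¬ (0:ℕ) = N+1 by omega)]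
        have h1 : ∑ a ∈ Finset.range N,
            (if a+1 = N+1 then t else w (a+1)) * (if N - a = N+1 then t else w (N - a)) = S := by
          refine Finset.sum_congr rfl fun a ha => ?_
          rw [Finset.mem_range] at ha
          rw [if_neg (by omega), if_neg (by omega)]
        rw [h1, hw0, ht]
        have h2s : (2:ℂ) * s ≠ 0 := mul_ne_zero two_ne_zero hs0
        field_simp
        ring

private lemma sqrt_seq_unique {w w' : ℕ → ℂ} {N : ℕ} (h0 : w 0 = w' 0) (hne : w 0 ≠ 0)
    (h : ∀ n ≤ N, convSq w n = convSq w' n) : ∀ m ≤ N, w m = w' m := by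
  intro m
  induction m using Nat.strong_induction_on with
  | _ m ih =>
    intro hm
    match m, hm with
    | 0, _ => exact h0
    | (n+1), hm =>
      have hh := h (n+1) hm
      rw [convSq_split, convSq_split] at hh
      have heq : ∑ a ∈ Finset.range n, w (a+1) * w (n - a)
          = ∑ a ∈ Finset.range n, w' (a+1) * w' (n - a) := by
        refine Finset.sum_congr rfl fun a ha => ?_
        rw [Finset.mem_range] at ha
        rw [ih (a+1) (by omega) (by omega), ih (n-a) (by omega) (by omega)]
      rw [heq, h0] at hh
      have h2 : (2 : ℂ) * w' 0 ≠ 0 := by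
        rw [← h0]; exact mul_ne_zero two_ne_zero hne
      exact mul_left_cancel₀ h2 (add_right_cancel hh)

private lemma key (r : ℕ) (hr : 1 ≤ r) (z : ℕ → ℂ) (hz : ∀ m, r ≤ m → z m = 0)
    (i : ℕ) (hi1 : r + 1 ≤ i) (hi2 : i ≤ 2*r) :
    2 * quadMapTw z i = convSq (fun m => if m < r then z (r-1-m) else 0) (2*r - i) := by
  have h1 : 2 * quadMapTw z i = ∑ a ∈ Finset.range (i-1), z a * z (i-2-a) := by
    unfold quadMapTw; ring
  rw [h1]
  have h2 : ∑ a ∈ Finset.range (i-1), z a * z (i-2-a)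
      = ∑ a ∈ Finset.Ico (i-1-r) r, z a * z (i-2-a) := by
    symm
    apply Finset.sum_subset
    · intro a ha; rw [Finset.mem_Ico] at ha; rw [Finset.mem_range]; omega
    · intro a ha hna
      rw [Finset.mem_range] at ha
      rw [Finset.mem_Ico] at hna
      push_neg at hna
      rcases Nat.lt_or_ge a (i-1-r) with h | h
      · rw [hz (i-2-a) (by omega), mul_zero]
      · rw [hz a (hna h), zero_mul]
  rw [h2]
  unfold convSq
  refine Finset.sum_nbij' (fun a => r - 1 - a) (fun b => r - 1 - b) ?_ ?_ ?_ ?_ ?_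
  · intro a ha
    rw [Finset.mem_Ico] at ha
    rw [Finset.mem_range]
    show r - 1 - a < 2*r - i + 1
    omega
  · intro b hb
    rw [Finset.mem_range] at hb
    rw [Finset.mem_Ico]
    show i - 1 - r ≤ r - 1 - b ∧ r - 1 - b < r
    omega
  · intro a ha
    rw [Finset.mem_Ico] at ha
    show r - 1 - (r - 1 - a) = a
    omega
  · intro b hb
    rw [Finset.mem_range] at hb
    show r - 1 - (r - 1 - b) = b
    omega
  · intro a ha
    rw [Finset.mem_Ico] at ha
    show z a * z (i-2-a) =
      (if r - 1 - a < r then z (r-1-(r-1-a)) else 0) *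
      (if 2*r - i - (r - 1 - a) < r then z (r-1-(2*r - i - (r-1-a))) else 0)
    rw [if_pos (by omega), if_pos (by omega)]
    have e1 : r - 1 - (r - 1 - a) = a := by omega
    have e2 : r - 1 - (2*r - i - (r - 1 - a)) = i - 2 - a := by omega
    rw [e1, e2]

theorem stmt3 (r : ℕ) (hr : 1 ≤ r) :
    (∀ lam : ℕ → ℂ, lam (2*r) ≠ 0 →
      ∃ z : ℕ → ℂ, (∀ m, r ≤ m → z m = 0) ∧ z (r - 1) ≠ 0 ∧
        ∀ i, r + 1 ≤ i → i ≤ 2*r → quadMapTw z i = lam i) ∧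
    (∀ z z' : ℕ → ℂ, (∀ m, r ≤ m → z m = 0) → z (r - 1) ≠ 0 →
      (∀ m, r ≤ m → z' m = 0) → z' (r - 1) ≠ 0 →
      ((∀ i, r + 1 ≤ i → i ≤ 2*r → quadMapTw z i = quadMapTw z' i) ↔
        (z' = z ∨ z' = fun m => - z m))) := by
  constructor
  · -- surjectivity
    intro lam hlam
    obtain ⟨s, hs⟩ := IsAlgClosed.exists_pow_nat_eq (k := ℂ) (2 * lam (2*r)) (n := 2) (by norm_num)
    have hs0 : s ≠ 0 := by
      intro h
      rw [h] at hs
      apply hlam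
      have h2 : (2:ℂ) * lam (2*r) = 0 := by rw [← hs]; ring
      rcases mul_eq_zero.mp h2 with h' | h'
      · exact absurd h' two_ne_zero
      · exact h'
    set c : ℕ → ℂ := fun n => 2 * lam (2*r - n) with hc
    have hss : s * s = c 0 := by
      show s * s = 2 * lam (2*r - 0)
      rw [Nat.sub_zero, ← hs]
      ring
    obtain ⟨w, hw0, hw⟩ := exists_sqrt_seq c s hs0 hss (r-1)
    have hzsupp : ∀ m, r ≤ m →
        (fun m => if m < r then w (r-1-m) else 0 : ℕ → ℂ) m = 0 := by
      intro m hm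
      exact if_neg (by omega)
    refine ⟨fun m => if m < r then w (r-1-m) else 0, hzsupp, ?_, ?_⟩
    · show (if r - 1 < r then w (r-1-(r-1)) else 0) ≠ 0
      rw [if_pos (by omega), Nat.sub_self, hw0]
      exact hs0
    · intro i hi1 hi2
      have hk := key r hr _ hzsupp i hi1 hi2
      have hagree : ∀ a ≤ 2*r - i,
          (fun m => if m < r then
            (fun k => if k < r then w (r-1-k) else 0 : ℕ → ℂ) (r-1-m) else 0 : ℕ → ℂ) a
          = w a := by
        intro a ha
        show (if a < r then (if r - 1 - a < r then w (r-1-(r-1-a)) else 0) else 0) = w a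
        rw [if_pos (by omega), if_pos (by omega)]
        congr 1
        omega
      rw [convSq_congr hagree, hw (2*r - i) (by omega)] at hk
      have he : (2:ℂ) * lam (2*r - (2*r - i)) = 2 * lam i := by
        congr 2
        omega
      rw [show c (2*r-i) = 2 * lam (2*r - (2*r-i)) from rfl, he] at hk
      exact mul_left_cancel₀ two_ne_zero hk
  · -- injectivity up to sign
    intro z z' hz hz1 hz' hz1'
    constructor
    · intro h
      set w : ℕ → ℂ := fun m => if m < r then z (r-1-m) else 0 with hwdef
      set w' : ℕ → ℂ := fun m => if m < r then z' (r-1-m) else 0 with hw'def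
      have hww' : ∀ n ≤ r-1, convSq w n = convSq w' n := by
        intro n hn
        have h1 := key r hr z hz (2*r - n) (by omega) (by omega)
        have h2 := key r hr z' hz' (2*r - n) (by omega) (by omega)
        have e : 2*r - (2*r - n) = n := by omega
        rw [e] at h1 h2
        rw [← h1, ← h2, h (2*r - n) (by omega) (by omega)]
      have hw0 : w 0 = z (r-1) := by
        show (if 0 < r then z (r-1-0) else 0) = z (r-1)
        rw [if_pos (by omega), Nat.sub_zero]
      have hw'0 : w' 0 = z' (r-1) := by
        show (if 0 < r then z' (r-1-0) else 0) = z' (r-1)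
        rw [if_pos (by omega), Nat.sub_zero]
      have hwz : ∀ m, m < r → w (r-1-m) = z m := by
        intro m hm
        show (if r - 1 - m < r then z (r-1-(r-1-m)) else 0) = z m
        rw [if_pos (by omega)]
        congr 1
        omega
      have hwz' : ∀ m, m < r → w' (r-1-m) = z' m := by
        intro m hm
        show (if r - 1 - m < r then z' (r-1-(r-1-m)) else 0) = z' m
        rw [if_pos (by omega)]
        congr 1
        omega
      have hc0 := hww' 0 (by omega)
      rw [convSq_zero, convSq_zero, hw0, hw'0] at hc0
      rcases mul_self_eq_mul_self_iff.mp hc0 with hcase | hcase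
      · left
        funext m
        rcases Nat.lt_or_ge m r with hm | hm
        · have hu := sqrt_seq_unique (w := w) (w' := w')
            (by rw [hw0, hw'0, hcase]) (by rw [hw0]; exact hz1) hww' (r-1-m) (by omega)
          rw [← hwz m hm, ← hwz' m hm, hu]
        · rw [hz' m hm, hz m hm]
      · right
        funext m
        show z' m = - z m
        rcases Nat.lt_or_ge m r with hm | hm
        · have hu := sqrt_seq_unique (w := w) (w' := fun k => - w' k)
            (show w 0 = - w' 0 by rw [hw0, hw'0, hcase])
            (by rw [hw0]; exact hz1)
            (by intro n hn; rw [convSq_neg]; exact hww' n hn) (r-1-m) (by omega)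
          have hu' : w (r-1-m) = - w' (r-1-m) := hu
          have hzz : z m = - z' m := by rw [← hwz m hm, hu', hwz' m hm]
          rw [hzz, neg_neg]
        · rw [hz' m hm, hz m hm, neg_zero]
    · intro h i hi1 hi2
      rcases h with h | h
      · rw [h]
      · rw [h]
        unfold quadMapTw
        congr 1
        refine Finset.sum_congr rfl fun a _ => ?_
        show z a * z (i-2-a) = (- z a) * (- z (i-2-a))
        rw [neg_mul_neg]
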